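/- Fix ε>0 and a binary-secret prior with 0 < q_{s₁} ≤ q_{s₀} < 1, and set R₁ = q_{s₀}/q_{s₁} and R₂ = (1−q_{s₁})/(1−q_{s₀}). Over the feasible set, the maximum value of l₁^{(0)} equals: q_{s₀} if R₁ ≤ e^ε and R₂ ≤ e^ε; e^ε·q_{s₁} if R₁ > e^ε and (R₂ ≤ e^ε, or R₂ > e^ε and q_{s₁} < 1/(1+e^ε)); and 1 − e^{−ε}·(1−q_{s₁}) if R₂ > e^ε and (R₁ ≤ e^ε, or R₁ > e^ε and q_{s₁} ≥ 1/(1+e^ε)). The maximum value of l₄^{(1)} equals: 1 − q_{s₁} if R₁ ≤ e^ε and R₂ ≤ e^ε; 1 − e^{−ε}·q_{s₀} if R₁ > e^ε and (R₂ ≤ e^ε, or R₂ > e^ε and q_{s₀} ≤ 1/(1+e^{−ε})); and e^ε·(1−q_{s₀}) if R₂ > e^ε and (R₁ ≤ e^ε, or R₁ > e^ε and q_{s₀} > 1/(1+e^{−ε})). Moreover both maxima are attained simultaneously by a single feasible point (the feasible dominant point). -/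

import Mathlib

open Real
open scoped Classical

noncomputable section

namespace IPPaper

variable {S T : Type} [Fintype S] [Fintype T]

/-- Marginal probability of the secret `S`. -/
def pS (P : S → Bool → T → ℝ) (s : S) : ℝ := ∑ y, ∑ t, P s y t

/-- Marginal probability of the signal `T`. -/
def pT (P : S → Bool → T → ℝ) (t : T) : ℝ := ∑ s, ∑ y, P s y t

/-- Joint marginal on `(S,T)`. -/
def pST (P : S → Bool → T → ℝ) (s : S) (t : T) : ℝ := ∑ y, P s y t

/-- Joint marginal on `(Y,T)`. -/
def pYT (P : S → Bool → T → ℝ) (y : Bool) (t : T) : ℝ := ∑ s, P s y t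

/-- Joint marginal on `(S,Y)`. -/
def pSY (P : S → Bool → T → ℝ) (s : S) (y : Bool) : ℝ := ∑ t, P s y t

/-- An information structure: nonnegative, sums to one, every secret has positive
probability. -/
def InfoStructure (P : S → Bool → T → ℝ) : Prop :=
  (∀ s y t, 0 ≤ P s y t) ∧ (∑ s, ∑ y, ∑ t, P s y t) = 1 ∧ ∀ s, 0 < pS P s

/-- Conditional probability `P(T = t | S = s)`. -/
def condTS (P : S → Bool → T → ℝ) (t : T) (s : S) : ℝ := pST P s t / pS P s

/-- Conditional probability `P(S = s | T = t)`. -/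
def condST (P : S → Bool → T → ℝ) (s : S) (t : T) : ℝ := pST P s t / pT P t

/-- Posterior `P(Y = 1 | T = t)`. -/
def postYT (P : S → Bool → T → ℝ) (t : T) : ℝ := pYT P true t / pT P t

/-- Posterior `P(Y = 1 | S = s, T = t)`. -/
def postYST (P : S → Bool → T → ℝ) (s : S) (t : T) : ℝ := P s true t / pST P s t

/-- Prior conditional `P(Y = 1 | S = s)`. -/
def qS (P : S → Bool → T → ℝ) (s : S) : ℝ := pSY P s true / pS P s

/-- `ε`-inferential privacy. -/
def IsIP (ε : ℝ) (P : S → Bool → T → ℝ) : Prop :=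
  ∀ s₁ s₂ t, condTS P t s₁ ≤ Real.exp ε * condTS P t s₂

/-- Blackwell dominance via a row-stochastic garbling kernel. -/
def BlackwellDom {T₁ T₂ : Type} [Fintype T₁] [Fintype T₂]
    (Q₁ : Bool → T₁ → ℝ) (Q₂ : Bool → T₂ → ℝ) : Prop :=
  ∃ G : T₁ → T₂ → ℝ, (∀ a b, 0 ≤ G a b) ∧ (∀ a, ∑ b, G a b = 1) ∧
    ∀ y b, Q₂ y b = ∑ a, Q₁ y a * G a b

/-- `ε`-IP Blackwell optimality: no ε-IP information structure with the same
marginal on `(S,Y)` (over any finite signal set) strictly Blackwell dominates it. -/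
def BlackwellOptimal (ε : ℝ) (P : S → Bool → T → ℝ) : Prop :=
  InfoStructure P ∧ IsIP ε P ∧
  ¬ ∃ (n : ℕ) (P' : S → Bool → Fin n → ℝ),
      InfoStructure P' ∧ IsIP ε P' ∧ (∀ s y, pSY P' s y = pSY P s y) ∧
      BlackwellDom (pYT P') (pYT P) ∧ ¬ BlackwellDom (pYT P) (pYT P')

/-- Membership in `T̃`: signals with positive probability and nondegenerate posterior. -/
def inTildeT (P : S → Bool → T → ℝ) (t : T) : Prop :=
  0 < pT P t ∧ postYT P t ≠ 0 ∧ postYT P t ≠ 1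

/-- `L_t = min_s P(T=t|S=s)`. -/
def Lval [Nonempty S] (P : S → Bool → T → ℝ) (t : T) : ℝ :=
  Finset.univ.inf' Finset.univ_nonempty (fun s => condTS P t s)

/-- `H_t = max_s P(T=t|S=s)`. -/
def Hval [Nonempty S] (P : S → Bool → T → ℝ) (t : T) : ℝ :=
  Finset.univ.sup' Finset.univ_nonempty (fun s => condTS P t s)

/-- Expected utility `Σ_{t : P(T=t)>0} P(T=t)·u(P(Y=1|T=t))`. -/
def EU (P : S → Bool → T → ℝ) (u : ℝ → ℝ) : ℝ :=
  ∑ t ∈ Finset.univ.filter (fun t => 0 < pT P t), pT P t * u (postYT P t)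

end IPPaper

namespace IPPaper

/-- Feasibility conditions for the cell widths `l i j = P(T = t_{i+1} | S = s_j)`
(Lemma 5.1 of the paper), with parameters `ε`, `q0 = q_{s₀}`, `q1 = q_{s₁}`. -/
def Feasible (ε q0 q1 : ℝ) (l : Fin 4 → Fin 2 → ℝ) : Prop :=
  l 0 1 = q1 ∧ l 3 0 = 1 - q0 ∧
  l 1 0 = Real.exp ε * l 1 1 ∧ l 2 1 = Real.exp ε * l 2 0 ∧
  Real.exp (-ε) * l 0 1 ≤ l 0 0 ∧ l 0 0 ≤ Real.exp ε * l 0 1 ∧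
  Real.exp (-ε) * l 3 0 ≤ l 3 1 ∧ l 3 1 ≤ Real.exp ε * l 3 0 ∧
  (∀ j : Fin 2, ∑ i : Fin 4, l i j = 1) ∧
  (∀ (i : Fin 4) (j : Fin 2), 0 ≤ l i j)

/-- The feasible dominant point: feasible and simultaneously maximizing
`l₁^{(0)}` and `l₄^{(1)}` among feasible points. -/
def DominantPoint (ε q0 q1 : ℝ) (l : Fin 4 → Fin 2 → ℝ) : Prop :=
  Feasible ε q0 q1 l ∧
  ∀ l', Feasible ε q0 q1 l' → l' 0 0 ≤ l 0 0 ∧ l' 3 1 ≤ l 3 1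

/-- Expected utility associated to a feasible point: signal probabilities
`p_{t_i} = π₀·l_i^{(0)} + π₁·l_i^{(1)}` and posteriors
`q_{t₁}=1`, `q_{t₂}=e^ε·π₀/(e^ε·π₀+π₁)`, `q_{t₃}=π₀/(π₀+e^ε·π₁)`, `q_{t₄}=0`. -/
def Ufun (ε π0 π1 : ℝ) (u : ℝ → ℝ) (l : Fin 4 → Fin 2 → ℝ) : ℝ :=
  (π0 * l 0 0 + π1 * l 0 1) * u 1 +
  (π0 * l 1 0 + π1 * l 1 1) * u (Real.exp ε * π0 / (Real.exp ε * π0 + π1)) +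
  (π0 * l 2 0 + π1 * l 2 1) * u (π0 / (π0 + Real.exp ε * π1)) +
  (π0 * l 3 0 + π1 * l 3 1) * u 0

end IPPaper

namespace IPPaper


lemma feasible_mk (ε q0 q1 x00 x11 x20 x31 : ℝ)
    (hx11 : 0 ≤ x11) (hx20 : 0 ≤ x20)
    (hlb0 : Real.exp (-ε) * q1 ≤ x00) (hub0 : x00 ≤ Real.exp ε * q1)
    (hlb3 : Real.exp (-ε) * (1-q0) ≤ x31) (hub3 : x31 ≤ Real.exp ε * (1-q0))
    (hq1 : 0 ≤ q1) (hq0 : q0 ≤ 1)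
    (hrow0 : x00 + Real.exp ε * x11 + x20 + (1-q0) = 1)
    (hrow1 : q1 + x11 + Real.exp ε * x20 + x31 = 1) :
    Feasible ε q0 q1
      ![![x00,q1],![Real.exp ε * x11,x11],![x20,Real.exp ε * x20],![1-q0,x31]] := by
  have hE : (0:ℝ) < Real.exp ε := Real.exp_pos _
  have hE' : (0:ℝ) < Real.exp (-ε) := Real.exp_pos _
  have h00 : 0 ≤ x00 := le_trans (by positivity) hlb0
  have h31 : 0 ≤ x31 := le_trans (by nlinarith) hlb3
  refine ⟨by simp, by simp, by simp, by simp, by simpa using hlb0, by simpa using hub0,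
    by simpa using hlb3, by simpa using hub3, ?_, ?_⟩
  · intro j; fin_cases j <;> simp [Fin.sum_univ_four] <;> linarith
  · intro i j; fin_cases i <;> fin_cases j <;> simp <;> nlinarith

set_option maxHeartbeats 2000000 in
/-- the maxima of `l₁^{(0)}` and `l₄^{(1)}` over the feasible set,
in closed form by cases on `R₁ = q₀/q₁`, `R₂ = (1-q₁)/(1-q₀)`, attained
simultaneously at a single feasible point. -/
theorem statement17 (ε q0 q1 : ℝ)
    (hε : 0 < ε) (hq1 : 0 < q1) (hq01 : q1 ≤ q0) (hq0 : q0 < 1)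
    (M1 M4 : ℝ)
    -- case values for the maximum of l₁^{(0)}
    (hM1a : q0 / q1 ≤ Real.exp ε ∧ (1 - q1) / (1 - q0) ≤ Real.exp ε → M1 = q0)
    (hM1b : Real.exp ε < q0 / q1 ∧
        ((1 - q1) / (1 - q0) ≤ Real.exp ε ∨
         (Real.exp ε < (1 - q1) / (1 - q0) ∧ q1 < 1 / (1 + Real.exp ε))) →
      M1 = Real.exp ε * q1)
    (hM1c : Real.exp ε < (1 - q1) / (1 - q0) ∧
        (q0 / q1 ≤ Real.exp ε ∨
         (Real.exp ε < q0 / q1 ∧ 1 / (1 + Real.exp ε) ≤ q1)) →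
      M1 = 1 - Real.exp (-ε) * (1 - q1))
    -- case values for the maximum of l₄^{(1)}
    (hM4a : q0 / q1 ≤ Real.exp ε ∧ (1 - q1) / (1 - q0) ≤ Real.exp ε → M4 = 1 - q1)
    (hM4b : Real.exp ε < q0 / q1 ∧
        ((1 - q1) / (1 - q0) ≤ Real.exp ε ∨
         (Real.exp ε < (1 - q1) / (1 - q0) ∧ q0 ≤ 1 / (1 + Real.exp (-ε)))) →
      M4 = 1 - Real.exp (-ε) * q0)
    (hM4c : Real.exp ε < (1 - q1) / (1 - q0) ∧
        (q0 / q1 ≤ Real.exp ε ∨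
         (Real.exp ε < q0 / q1 ∧ 1 / (1 + Real.exp (-ε)) < q0)) →
      M4 = Real.exp ε * (1 - q0)) :
    (∀ l, Feasible ε q0 q1 l → l 0 0 ≤ M1 ∧ l 3 1 ≤ M4) ∧
    (∃ l, Feasible ε q0 q1 l ∧ l 0 0 = M1 ∧ l 3 1 = M4) := by
  have hEp : (0:ℝ) < Real.exp ε := Real.exp_pos _
  have hFp : (0:ℝ) < Real.exp (-ε) := Real.exp_pos _
  set E := Real.exp ε with hEdef
  set F := Real.exp (-ε) with hFdef
  have hEF : E * F = 1 := by rw [hEdef, hFdef, ← Real.exp_add]; simp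
  have hE1 : 1 < E := by
    rw [hEdef]; nlinarith [Real.add_one_le_exp ε]
  have hF1 : F < 1 := by nlinarith [mul_pos hFp (sub_pos.mpr hE1), hEF]
  have hq1' : q1 < 1 := lt_of_le_of_lt hq01 hq0
  have hq0p : 0 < q0 := lt_of_lt_of_le hq1 hq01
  have h1q0 : (0:ℝ) < 1 - q0 := by linarith
  have h1q1 : (0:ℝ) < 1 - q1 := by linarith
  have hEp1 : (0:ℝ) < 1 + E := by linarith
  have hFp1 : (0:ℝ) < 1 + F := by linarith
  -- universal upper bounds over the feasible set
  have key : ∀ l, Feasible ε q0 q1 l →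
      l 0 0 ≤ q0 ∧ l 0 0 ≤ E * q1 ∧ l 0 0 ≤ 1 - F * (1 - q1) ∧
      l 3 1 ≤ 1 - q1 ∧ l 3 1 ≤ E * (1 - q0) ∧ l 3 1 ≤ 1 - F * q0 := by
    rintro l ⟨h01, h30, h10, h21, hlb0, hub0, hlb3, hub3, hsum, hnn⟩
    have hs0 := hsum 0
    have hs1 := hsum 1
    rw [Fin.sum_univ_four] at hs0 hs1
    rw [h01] at hub0 hs1
    rw [h30] at hub3 hs0
    have n11 := hnn 1 1
    have n20 := hnn 2 0
    have n10 := hnn 1 0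
    have n21 := hnn 2 1
    have n00 := hnn 0 0
    have n31 := hnn 3 1
    have b1 : l 0 0 ≤ q0 := by linarith
    have b2 : l 0 0 ≤ E * q1 := hub0
    have b4 : l 3 1 ≤ 1 - q1 := by linarith
    have b5 : l 3 1 ≤ E * (1 - q0) := hub3
    have hEE1 : (0:ℝ) ≤ E * E - 1 := by nlinarith
    have e0 : l 0 0 = q0 - E * l 1 1 - l 2 0 := by rw [← h10]; linarith
    have e1 : (1:ℝ) - q1 = l 1 1 + E * l 2 0 + l 3 1 := by rw [← h21]; linarith
    have e0' : E * l 0 0 = E * q0 - E * E * l 1 1 - E * l 2 0 := by rw [e0]; ring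
    have hub3' : l 3 1 ≤ E - E * q0 := by
      have : E * (1 - q0) = E - E * q0 := by ring
      linarith [b5]
    have g1 : E * l 0 0 + (1 - q1) ≤ E := by
      linarith [e0', e1, hub3', mul_nonneg hEE1 n11]
    have b3 : l 0 0 ≤ 1 - F * (1 - q1) := by
      have p1 : E * F * l 0 0 = l 0 0 := by rw [hEF, one_mul]
      linarith [mul_le_mul_of_nonneg_left g1 hFp.le, p1, hEF]
    have e2 : l 3 1 = 1 - q1 - l 1 1 - E * l 2 0 := by rw [← h21]; linarith
    have e2' : E * l 3 1 = E * (1 - q1) - E * l 1 1 - E * E * l 2 0 := by rw [e2]; ring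
    have g2 : E * l 3 1 + q0 ≤ E := by
      linarith [e2', e0, b2, mul_nonneg hEE1 n20]
    have b6 : l 3 1 ≤ 1 - F * q0 := by
      have p1 : E * F * l 3 1 = l 3 1 := by rw [hEF, one_mul]
      linarith [mul_le_mul_of_nonneg_left g2 hFp.le, p1, hEF]
    exact ⟨b1, b2, b3, b4, b5, b6⟩
  by_cases hR1 : q0 ≤ E * q1
  · by_cases hR2 : 1 - q1 ≤ E * (1 - q0)
    · -- Case P1 : R1 ≤ e^ε, R2 ≤ e^ε
      have e1 : M1 = q0 := hM1a ⟨(div_le_iff₀ hq1).2 hR1, (div_le_iff₀ h1q0).2 hR2⟩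
      have e4 : M4 = 1 - q1 := hM4a ⟨(div_le_iff₀ hq1).2 hR1, (div_le_iff₀ h1q0).2 hR2⟩
      refine ⟨fun l hl => ?_, ?_⟩
      · obtain ⟨b1, b2, b3, b4, b5, b6⟩ := key l hl
        exact ⟨by rw [e1]; exact b1, by rw [e4]; exact b4⟩
      · refine ⟨_, feasible_mk ε q0 q1 q0 0 0 (1 - q1) le_rfl le_rfl
          (by nlinarith) hR1 (by nlinarith) hR2 hq1.le hq0.le (by ring) (by ring),
          by simp [e1], by simp [e4]⟩
    · -- Case P4a : R1 ≤ e^ε, R2 > e^ε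
      push_neg at hR2
      have hq1Ege : 1 ≤ q1 * (1 + E) := by
        nlinarith [mul_le_mul_of_nonneg_left hR1 hEp.le, hR2, hE1]
      have hc2 : E < (1 - q1) / (1 - q0) := (lt_div_iff₀ h1q0).2 hR2
      have hc1 : q0 / q1 ≤ E := (div_le_iff₀ hq1).2 hR1
      have e1 : M1 = 1 - F * (1 - q1) := hM1c ⟨hc2, Or.inl hc1⟩
      have e4 : M4 = E * (1 - q0) := hM4c ⟨hc2, Or.inl hc1⟩
      refine ⟨fun l hl => ?_, ?_⟩
      · obtain ⟨b1, b2, b3, b4, b5, b6⟩ := key l hl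
        exact ⟨by rw [e1]; exact b3, by rw [e4]; exact b5⟩
      · have hq1E' : E - 1 ≤ q1 * (E * E - 1) := by nlinarith [hq1Ege, hE1]
        refine ⟨_, feasible_mk ε q0 q1 (1 - F * (1 - q1)) 0 (F * (1 - q1) - (1 - q0)) (E * (1 - q0))
          le_rfl
          (by nlinarith [mul_lt_mul_of_pos_left hR2 hFp, hEF, h1q0.le])
          (by nlinarith)
          (by nlinarith [hq1E', hEF, hEp, h1q1.le, hE1])
          (by nlinarith)
          le_rfl hq1.le hq0.le (by ring) (by linear_combination (1 - q1) * hEF),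
          by simp [e1], by simp [e4]⟩
  · push_neg at hR1
    by_cases hq0E : q0 * (1 + E) ≤ E
    · -- Case P2 : R1 > e^ε, q0 ≤ e^ε/(1+e^ε)
      have hc1 : E < q0 / q1 := (lt_div_iff₀ hq1).2 hR1
      have hq1small : q1 * (1 + E) < 1 := by nlinarith [hR1, hq0E, hE1]
      have hq0F : q0 * (1 + F) ≤ 1 := by nlinarith [hEF, hq0E, hFp]
      have alt1 : (1 - q1) / (1 - q0) ≤ E ∨
          (E < (1 - q1) / (1 - q0) ∧ q1 < 1 / (1 + E)) := by
        rcases le_or_gt (1 - q1) (E * (1 - q0)) with h | h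
        · exact Or.inl ((div_le_iff₀ h1q0).2 h)
        · exact Or.inr ⟨(lt_div_iff₀ h1q0).2 h, (lt_div_iff₀ hEp1).2 hq1small⟩
      have alt4 : (1 - q1) / (1 - q0) ≤ E ∨
          (E < (1 - q1) / (1 - q0) ∧ q0 ≤ 1 / (1 + F)) := by
        rcases le_or_gt (1 - q1) (E * (1 - q0)) with h | h
        · exact Or.inl ((div_le_iff₀ h1q0).2 h)
        · exact Or.inr ⟨(lt_div_iff₀ h1q0).2 h, (le_div_iff₀ hFp1).2 hq0F⟩
      have e1 : M1 = E * q1 := hM1b ⟨hc1, alt1⟩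
      have e4 : M4 = 1 - F * q0 := hM4b ⟨hc1, alt4⟩
      refine ⟨fun l hl => ?_, ?_⟩
      · obtain ⟨b1, b2, b3, b4, b5, b6⟩ := key l hl
        exact ⟨by rw [e1]; exact b2, by rw [e4]; exact b6⟩
      · refine ⟨_, feasible_mk ε q0 q1 (E * q1) (F * (q0 - E * q1)) 0 (1 - F * q0)
          (mul_nonneg hFp.le (by linarith)) le_rfl
          (by nlinarith) le_rfl
          (by nlinarith)
          (by nlinarith [hEF, hq0E, hE1, hq0p.le])
          hq1.le hq0.le
          (by linear_combination (q0 - E * q1) * hEF)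
          (by linear_combination (-q1) * hEF),
          by simp [e1], by simp [e4]⟩
    · push_neg at hq0E
      have hc1 : E < q0 / q1 := (lt_div_iff₀ hq1).2 hR1
      have hq0F : 1 < q0 * (1 + F) := by nlinarith [hEF, hq0E, hFp]
      by_cases hq1E : q1 * (1 + E) < 1
      · -- Case P3 : R1 > e^ε, q0 > e^ε/(1+e^ε), q1 < 1/(1+e^ε)
        have hR2 : E * (1 - q0) < 1 - q1 := by
          nlinarith [hq1E, mul_lt_mul_of_pos_left hq0E hEp, hE1, hEp]
        have hc2 : E < (1 - q1) / (1 - q0) := (lt_div_iff₀ h1q0).2 hR2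
        have e1 : M1 = E * q1 :=
          hM1b ⟨hc1, Or.inr ⟨hc2, (lt_div_iff₀ hEp1).2 hq1E⟩⟩
        have e4 : M4 = E * (1 - q0) :=
          hM4c ⟨hc2, Or.inr ⟨hc1, (div_lt_iff₀ hFp1).2 hq0F⟩⟩
        refine ⟨fun l hl => ?_, ?_⟩
        · obtain ⟨b1, b2, b3, b4, b5, b6⟩ := key l hl
          exact ⟨by rw [e1]; exact b2, by rw [e4]; exact b5⟩
        · have hDpos : (0:ℝ) < E * E - 1 := by nlinarith
          refine ⟨_, feasible_mk ε q0 q1 (E * q1)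
            ((E * (q0 - E * q1) - (1 - q1 - E * (1 - q0))) / (E * E - 1))
            ((E * (1 - q1 - E * (1 - q0)) - (q0 - E * q1)) / (E * E - 1))
            (E * (1 - q0))
            (div_nonneg (by nlinarith [hq1E, hE1]) hDpos.le)
            (div_nonneg (by nlinarith [hq0E, hE1]) hDpos.le)
            (by nlinarith) le_rfl
            (by nlinarith) le_rfl
            hq1.le hq0.le
            (by rw [← hEdef]; linear_combination (q0 - E * q1) * (mul_inv_cancel₀ hDpos.ne'))
            (by rw [← hEdef]; linear_combination (1 - q1 - E * (1 - q0)) * (mul_inv_cancel₀ hDpos.ne')),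
            by simp [e1], by simp [e4]⟩
      · -- Case P4b : R1 > e^ε, q0 > e^ε/(1+e^ε), q1 ≥ 1/(1+e^ε)
        push_neg at hq1E
        have hR2 : E * (1 - q0) < 1 - q1 := by
          nlinarith [mul_lt_mul_of_pos_left hR1 hEp, hq1E, hE1]
        have hc2 : E < (1 - q1) / (1 - q0) := (lt_div_iff₀ h1q0).2 hR2
        have e1 : M1 = 1 - F * (1 - q1) :=
          hM1c ⟨hc2, Or.inr ⟨hc1, (div_le_iff₀ hEp1).2 hq1E⟩⟩
        have e4 : M4 = E * (1 - q0) :=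
          hM4c ⟨hc2, Or.inr ⟨hc1, (div_lt_iff₀ hFp1).2 hq0F⟩⟩
        refine ⟨fun l hl => ?_, ?_⟩
        · obtain ⟨b1, b2, b3, b4, b5, b6⟩ := key l hl
          exact ⟨by rw [e1]; exact b3, by rw [e4]; exact b5⟩
        · have hq1E' : E - 1 ≤ q1 * (E * E - 1) := by nlinarith [hq1E, hE1]
          refine ⟨_, feasible_mk ε q0 q1 (1 - F * (1 - q1)) 0 (F * (1 - q1) - (1 - q0)) (E * (1 - q0))
            le_rfl
            (by nlinarith [mul_lt_mul_of_pos_left hR2 hFp, hEF, h1q0.le])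
            (by nlinarith)
            (by nlinarith [hq1E', hEF, hEp, h1q1.le, hE1])
            (by nlinarith)
            le_rfl hq1.le hq0.le (by ring) (by linear_combination (1 - q1) * hEF),
            by simp [e1], by simp [e4]⟩

end IPPaper
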